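/- With β ≠ 0, real F, G, U := 1 + F/β² − G²/(4β⁴) > 0, L_F := −1/(2√U), L_G := G/(4β²√U), P := 4(L_F² − L_G²)F + 8 L_F L_G G and S := 4(L_F² − L_G²)G − 8 L_F L_G F, the quantity V := 1 − P/β² − S²/(4β⁴) satisfies V = (1 + G²/(4β⁴))²/U. -/

import Mathlib

/-- For Born–Infeld electrodynamics, V := 1 − P/β² − S²/(4β⁴) built from the dual
invariants satisfies V = (1 + G²/(4β⁴))²/U. -/
theorem bornInfeld_dual_invariant_V (β F G : ℝ) (hβ : β ≠ 0)
    (hU : 0 < 1 + F / β ^ 2 - G ^ 2 / (4 * β ^ 4)) :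
    let U := 1 + F / β ^ 2 - G ^ 2 / (4 * β ^ 4)
    let L_F := -1 / (2 * Real.sqrt U)
    let L_G := G / (4 * β ^ 2 * Real.sqrt U)
    let P := 4 * (L_F ^ 2 - L_G ^ 2) * F + 8 * L_F * L_G * G
    let S := 4 * (L_F ^ 2 - L_G ^ 2) * G - 8 * L_F * L_G * F
    1 - P / β ^ 2 - S ^ 2 / (4 * β ^ 4) = (1 + G ^ 2 / (4 * β ^ 4)) ^ 2 / U := by
  intro U L_F L_G P S
  have hUpos : (0:ℝ) < U := hU
  set s := Real.sqrt U with hsdef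
  have hspos : 0 < s := Real.sqrt_pos.mpr hUpos
  have hs : s ≠ 0 := ne_of_gt hspos
  have hsq : s ^ 2 = U := Real.sq_sqrt hUpos.le
  have hF : F = (U - 1) * β ^ 2 + G ^ 2 / (4 * β ^ 2) := by
    simp only [U]
    field_simp
    ring
  simp only [P, S, L_F, L_G]
  rw [← hsdef]
  rw [hF, ← hsq]
  field_simp
  ring
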